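/- With notation as in the diagonal-intersection setting: let w ∈ D(t₀), the set of primitive normal vectors of facets of Γ(f/g) containing the smallest face τ₀ through the diagonal point (t₀,…,t₀). Then d(w, Γ(g)) = 0 if and only if (t₀,…,t₀) ∈ F(w, Γ(f)); similarly, d(w, Γ(f)) = 0 if and only if (t₀,…,t₀) ∈ F(w, Γ(g)). -/
import Mathlib


open Finset Pointwise

variable {n : ℕ}

/-- The pairing `⟨k,x⟩ = ∑ i, k i * x i`. -/
noncomputable def dotp (k x : Fin n → ℝ) : ℝ := ∑ i, k i * x i

/-- Convex hull of the union of translated positive orthants `m + ℝ₊ⁿ`. -/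
def orthHull (S : Set (Fin n → ℝ)) : Set (Fin n → ℝ) :=
  convexHull ℝ (⋃ m ∈ S, {x : Fin n → ℝ | ∀ i, m i ≤ x i})

/-- `Γ` is a Newton polyhedron: the convex hull of `⋃_{m ∈ supp} (m + ℝ₊ⁿ)`
for a nonempty finite set of lattice points (the support of a polynomial
vanishing at the origin). -/
def IsNewtonPolyhedron (Γ : Set (Fin n → ℝ)) : Prop :=
  ∃ S : Finset (Fin n → ℕ), S.Nonempty ∧
    Γ = orthHull ((fun m : Fin n → ℕ => fun i => (m i : ℝ)) '' (S : Set (Fin n → ℕ)))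

/-- `d(k,Γ) = min_{x ∈ Γ} ⟨k,x⟩`. -/
noncomputable def dval (k : Fin n → ℝ) (Γ : Set (Fin n → ℝ)) : ℝ :=
  sInf ((fun x => dotp k x) '' Γ)

/-- First meet locus `F(k,Γ) = {x ∈ Γ : ⟨k,x⟩ = d(k,Γ)}`. -/
def fmeet (k : Fin n → ℝ) (Γ : Set (Fin n → ℝ)) : Set (Fin n → ℝ) :=
  {x ∈ Γ | dotp k x = dval k Γ}

/-- `σ(k) = ∑ i, k i`. -/
noncomputable def sigmaS (k : Fin n → ℝ) : ℝ := ∑ i, k i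

/-- The smallest face of `Γ` containing a point `p`: the intersection of all
first meet loci (faces) containing `p`. -/
def minFace (Γ : Set (Fin n → ℝ)) (p : Fin n → ℝ) : Set (Fin n → ℝ) :=
  ⋂₀ {F | p ∈ F ∧ ∃ k : Fin n → ℝ, (∀ i, 0 ≤ k i) ∧ F = fmeet k Γ}

/-- Cast a lattice vector to `ℝⁿ`. -/
def natVec (w : Fin n → ℕ) : Fin n → ℝ := fun i => (w i : ℝ)

/-- `w` is the primitive normal vector of a facet (face of dimension `n-1`) of `Γ`. -/
def IsPrimFacetNormal (Γ : Set (Fin n → ℝ)) (w : Fin n → ℕ) : Prop :=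
  w ≠ 0 ∧ Finset.univ.gcd w = 1 ∧
    Module.finrank ℝ (affineSpan ℝ (fmeet (natVec w) Γ)).direction = n - 1

/-- `D(t₀)`: primitive normal vectors of the facets of `Γ` containing the
smallest face through the diagonal point `p = (t₀,…,t₀)`. -/
def Dset (Γ : Set (Fin n → ℝ)) (p : Fin n → ℝ) : Set (Fin n → ℕ) :=
  {w | IsPrimFacetNormal Γ w ∧ minFace Γ p ⊆ fmeet (natVec w) Γ}

lemma dotp_add' (k a b : Fin n → ℝ) : dotp k (a + b) = dotp k a + dotp k b := by
  simp [dotp, Pi.add_apply, mul_add, Finset.sum_add_distrib]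

lemma dotp_nonneg' {k x : Fin n → ℝ} (hk : ∀ i, 0 ≤ k i) (hx : ∀ i, 0 ≤ x i) :
    0 ≤ dotp k x :=
  Finset.sum_nonneg fun i _ => mul_nonneg (hk i) (hx i)

lemma newton_nonneg {Γ : Set (Fin n → ℝ)} (hΓ : IsNewtonPolyhedron Γ) :
    ∀ x ∈ Γ, ∀ i, 0 ≤ x i := by
  obtain ⟨S, hS, rfl⟩ := hΓ
  have hconv : Convex ℝ {x : Fin n → ℝ | ∀ i, 0 ≤ x i} := by
    intro x hx y hy a b ha hb hab i
    exact add_nonneg (mul_nonneg ha (hx i)) (mul_nonneg hb (hy i))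
  have : orthHull ((fun m : Fin n → ℕ => fun i => (m i : ℝ)) '' (S : Set (Fin n → ℕ)))
      ⊆ {x : Fin n → ℝ | ∀ i, 0 ≤ x i} := by
    apply convexHull_min _ hconv
    intro y hy
    simp only [Set.mem_iUnion] at hy
    obtain ⟨m, hm, hy⟩ := hy
    obtain ⟨m', _, rfl⟩ := hm
    intro i
    exact le_trans (Nat.cast_nonneg _) (hy i)
  exact fun x hx i => this hx i

lemma newton_nonempty {Γ : Set (Fin n → ℝ)} (hΓ : IsNewtonPolyhedron Γ) : Γ.Nonempty := by
  obtain ⟨S, ⟨m, hm⟩, rfl⟩ := hΓ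
  refine ⟨fun i => (m i : ℝ), subset_convexHull ℝ _ ?_⟩
  simp only [Set.mem_iUnion]
  exact ⟨fun i => (m i : ℝ), ⟨m, hm, rfl⟩, fun i => le_refl _⟩

lemma newton_upward {Γ : Set (Fin n → ℝ)} (hΓ : IsNewtonPolyhedron Γ) {x v : Fin n → ℝ}
    (hx : x ∈ Γ) (hv : ∀ i, 0 ≤ v i) : x + v ∈ Γ := by
  obtain ⟨S, hS, rfl⟩ := hΓ
  set U := ⋃ m ∈ ((fun m : Fin n → ℕ => fun i => (m i : ℝ)) '' (S : Set (Fin n → ℕ))),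
      {x : Fin n → ℝ | ∀ i, m i ≤ x i} with hU
  have hUp : ∀ u ∈ U, u + v ∈ U := by
    intro u hu
    simp only [hU, Set.mem_iUnion] at hu ⊢
    obtain ⟨m, hm, hu⟩ := hu
    exact ⟨m, hm, fun i => le_trans (hu i) (le_add_of_nonneg_right (hv i))⟩
  have hsub : convexHull ℝ U ⊆ (fun y => y + v) ⁻¹' (convexHull ℝ U) := by
    apply convexHull_min
    · exact fun u hu => subset_convexHull ℝ U (hUp u hu)
    · exact (convex_convexHull ℝ U).translate_preimage_left v
  exact hsub hx


lemma dval_bddBelow {k : Fin n → ℝ} {Γ : Set (Fin n → ℝ)} (hk : ∀ i, 0 ≤ k i)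
    (hΓ : ∀ x ∈ Γ, ∀ i, 0 ≤ x i) : BddBelow ((fun x => dotp k x) '' Γ) :=
  ⟨0, by rintro y ⟨z, hz, rfl⟩; exact dotp_nonneg' hk (hΓ z hz)⟩

lemma dval_le' {k : Fin n → ℝ} {Γ : Set (Fin n → ℝ)} (hk : ∀ i, 0 ≤ k i)
    (hΓ : ∀ x ∈ Γ, ∀ i, 0 ≤ x i) {x : Fin n → ℝ} (hx : x ∈ Γ) :
    dval k Γ ≤ dotp k x :=
  csInf_le (dval_bddBelow hk hΓ) ⟨x, hx, rfl⟩

lemma le_dval' {k : Fin n → ℝ} {Γ : Set (Fin n → ℝ)} (hne : Γ.Nonempty) {c : ℝ}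
    (h : ∀ x ∈ Γ, c ≤ dotp k x) : c ≤ dval k Γ :=
  le_csInf (hne.image _) (by rintro y ⟨z, hz, rfl⟩; exact h z hz)

lemma dval_minkowski {k : Fin n → ℝ} (hk : ∀ i, 0 ≤ k i) {Γa Γb : Set (Fin n → ℝ)}
    (ha : IsNewtonPolyhedron Γa) (hb : IsNewtonPolyhedron Γb) :
    dval k (Γa + Γb) = dval k Γa + dval k Γb := by
  have hane := newton_nonempty ha
  have hbne := newton_nonempty hb
  have hann := newton_nonneg ha
  have hbnn := newton_nonneg hb
  have habnn : ∀ x ∈ Γa + Γb, ∀ i, 0 ≤ x i := by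
    rintro x hx i
    obtain ⟨u, hu, v, hv, rfl⟩ := Set.mem_add.mp hx
    exact add_nonneg (hann u hu i) (hbnn v hv i)
  have habne : (Γa + Γb).Nonempty := hane.add hbne
  apply le_antisymm
  · have h1 : ∀ u ∈ Γa, dval k (Γa + Γb) - dval k Γb ≤ dotp k u := by
      intro u hu
      have h2 : ∀ v ∈ Γb, dval k (Γa + Γb) - dotp k u ≤ dotp k v := by
        intro v hv
        have : dval k (Γa + Γb) ≤ dotp k (u + v) :=
          dval_le' hk habnn (Set.add_mem_add hu hv)
        rw [dotp_add'] at this; linarith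
      have := le_dval' hbne h2
      linarith
    have := le_dval' hane h1
    linarith
  · apply le_dval' habne
    rintro x hx
    obtain ⟨u, hu, v, hv, rfl⟩ := Set.mem_add.mp hx
    rw [dotp_add']
    exact add_le_add (dval_le' hk hann hu) (dval_le' hk hbnn hv)

lemma key_lemma {k : Fin n → ℝ} (hk : ∀ i, 0 ≤ k i) {Γa Γb : Set (Fin n → ℝ)}
    (ha : IsNewtonPolyhedron Γa) (hb : IsNewtonPolyhedron Γb) {p : Fin n → ℝ}
    (hp : p ∈ fmeet k (Γa + Γb)) :
    dval k Γb = 0 ↔ p ∈ fmeet k Γa := by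
  obtain ⟨hpΓ, hpd⟩ := hp
  have hsum := dval_minkowski hk ha hb
  constructor
  · intro hzero
    obtain ⟨u, hu, v, hv, rfl⟩ := Set.mem_add.mp hpΓ
    have h1 : dval k Γa ≤ dotp k u := dval_le' hk (newton_nonneg ha) hu
    have h2 : dval k Γb ≤ dotp k v := dval_le' hk (newton_nonneg hb) hv
    have h3 : dotp k u + dotp k v = dval k Γa + dval k Γb := by
      rw [← dotp_add', hpd, hsum]
    have hu' : dotp k u = dval k Γa := by linarith
    have hv' : dotp k v = 0 := by linarith
    refine ⟨newton_upward ha hu (newton_nonneg hb v hv), ?_⟩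
    rw [dotp_add', hu', hv', add_zero]
  · rintro ⟨hpa, hpda⟩
    have : dval k Γa + dval k Γb = dval k Γa := by rw [← hsum, ← hpd, hpda]
    linarith

/-- for `w ∈ D(t₀)` (primitive normals of facets of `Γ(f/g)`
containing the smallest face through the diagonal point), `d(w,Γ(g)) = 0` iff
`(t₀,…,t₀) ∈ F(w,Γ(f))`, and `d(w,Γ(f)) = 0` iff `(t₀,…,t₀) ∈ F(w,Γ(g))`. -/
theorem dval_zero_iff_diagonal_in_first_meet
    (hn : 2 ≤ n)
    (Γf Γg : Set (Fin n → ℝ))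
    (hΓf : IsNewtonPolyhedron Γf) (hΓg : IsNewtonPolyhedron Γg)
    (t₀ : ℝ) (ht₀ : 0 < t₀)
    (hdiag : (fun _ : Fin n => t₀) ∈ frontier (Γf + Γg))
    (w : Fin n → ℕ) (hw : w ∈ Dset (Γf + Γg) (fun _ => t₀)) :
    (dval (natVec w) Γg = 0 ↔ (fun _ : Fin n => t₀) ∈ fmeet (natVec w) Γf) ∧
    (dval (natVec w) Γf = 0 ↔ (fun _ : Fin n => t₀) ∈ fmeet (natVec w) Γg) := by
  have hk : ∀ i, 0 ≤ natVec w i := fun i => Nat.cast_nonneg _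
  have hpmin : (fun _ : Fin n => t₀) ∈ minFace (Γf + Γg) (fun _ => t₀) :=
    Set.mem_sInter.mpr fun F hF => hF.1
  have hp : (fun _ : Fin n => t₀) ∈ fmeet (natVec w) (Γf + Γg) := hw.2 hpmin
  have hp' : (fun _ : Fin n => t₀) ∈ fmeet (natVec w) (Γg + Γf) := by
    rwa [add_comm Γg Γf]
  exact ⟨key_lemma hk hΓf hΓg hp, key_lemma hk hΓg hΓf hp'⟩
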